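/- Let φ : 2^V → ℝ be nonnegative submodular. If UpMin(φ) is simple, then φ is simple. Conversely, if φ is positive (φ(I) > 0 for all nonempty proper I ⊂ V) with positive range φ(V) > 0 and simple, then UpMin(φ) is simple. -/
import Mathlib


open Finset

/-- The UpMin transform: `UpMin φ I = min_{K ⊇ I} φ K`. -/
noncomputable def UpMin {V : Type*} [Fintype V] [DecidableEq V]
    (φ : Finset V → ℝ) (I : Finset V) : ℝ :=
  ((Finset.univ : Finset (Finset V)).filter fun K => I ⊆ K).inf'
    ⟨Finset.univ, by simp⟩ φ

lemma upMin_le {V : Type*} [Fintype V] [DecidableEq V]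
    (φ : Finset V → ℝ) {I K : Finset V} (h : I ⊆ K) : UpMin φ I ≤ φ K :=
  Finset.inf'_le _ (by simp [h])

lemma upMin_univ {V : Type*} [Fintype V] [DecidableEq V]
    (φ : Finset V → ℝ) : UpMin φ Finset.univ = φ Finset.univ := by
  apply le_antisymm (upMin_le φ (subset_refl _))
  apply Finset.le_inf'
  intro K hK
  simp only [mem_filter] at hK
  rw [Finset.univ_subset_iff.mp hK.2]

lemma upMin_exists {V : Type*} [Fintype V] [DecidableEq V]
    (φ : Finset V → ℝ) (I : Finset V) :
    ∃ K, I ⊆ K ∧ UpMin φ I = φ K := by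
  obtain ⟨K, hK, hEq⟩ := Finset.exists_mem_eq_inf'
    (s := (Finset.univ : Finset (Finset V)).filter fun K => I ⊆ K)
    ⟨Finset.univ, by simp⟩ φ
  simp only [mem_filter] at hK
  exact ⟨K, hK.2, hEq⟩

theorem simple_upMin
    {V : Type*} [Fintype V] [DecidableEq V]
    (φ : Finset V → ℝ)
    (h0 : φ ∅ = 0)
    (hsub : ∀ I₁ I₂ : Finset V, φ (I₁ ∪ I₂) + φ (I₁ ∩ I₂) ≤ φ I₁ + φ I₂)
    (hnn : ∀ I : Finset V, 0 ≤ φ I)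
    (hcard : 2 ≤ Fintype.card V) :
    ((∀ I : Finset V, I.Nonempty → I ≠ Finset.univ →
        UpMin φ Finset.univ < UpMin φ I + UpMin φ (Finset.univ \ I)) →
      ∀ I : Finset V, I.Nonempty → I ≠ Finset.univ →
        φ Finset.univ < φ I + φ (Finset.univ \ I)) ∧
    (((∀ I : Finset V, I.Nonempty → I ≠ Finset.univ → 0 < φ I) ∧
        0 < φ Finset.univ ∧
        (∀ I : Finset V, I.Nonempty → I ≠ Finset.univ →
          φ Finset.univ < φ I + φ (Finset.univ \ I))) →
      ∀ I : Finset V, I.Nonempty → I ≠ Finset.univ →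
        UpMin φ Finset.univ < UpMin φ I + UpMin φ (Finset.univ \ I)) := by
  constructor
  · intro h I hne hproper
    have := h I hne hproper
    rw [upMin_univ] at this
    calc φ Finset.univ < UpMin φ I + UpMin φ (Finset.univ \ I) := this
      _ ≤ φ I + φ (Finset.univ \ I) :=
        add_le_add (upMin_le φ (subset_refl _)) (upMin_le φ (subset_refl _))
  · rintro ⟨hpos, hV, hsimple⟩ I hne hproper
    rw [upMin_univ]
    obtain ⟨K, hIK, hK⟩ := upMin_exists φ I
    obtain ⟨L, hIL, hL⟩ := upMin_exists φ (Finset.univ \ I)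
    rw [hK, hL]
    have hKne : K.Nonempty := hne.mono hIK
    have hLne : L.Nonempty := by
      refine Nonempty.mono hIL ?_
      rw [Finset.sdiff_nonempty]
      exact fun h => hproper (Finset.univ_subset_iff.mp h)
    have hUnion : K ∪ L = Finset.univ := by
      apply Finset.eq_univ_of_forall
      intro v
      by_cases hv : v ∈ I
      · exact Finset.mem_union.mpr (Or.inl (hIK hv))
      · exact Finset.mem_union.mpr (Or.inr (hIL (by simp [hv])))
    have hsubKL := hsub K L
    rw [hUnion] at hsubKL
    rcases eq_or_ne (K ∩ L) ∅ with hKL | hKL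
    · -- L = univ \ K
      have hLeq : L = Finset.univ \ K := by
        apply Finset.eq_of_subset_of_card_le
        · intro v hvL
          simp only [Finset.mem_sdiff, Finset.mem_univ, true_and]
          intro hvK
          exact (Finset.notMem_empty v) (hKL ▸ Finset.mem_inter.mpr ⟨hvK, hvL⟩)
        · have h1 : K.card + L.card = Fintype.card V := by
            have := Finset.card_union_add_card_inter K L
            rw [hUnion, hKL] at this
            simpa [Finset.card_univ] using this.symm
          have h2 : (Finset.univ \ K).card = Fintype.card V - K.card := by
            rw [Finset.card_sdiff_of_subset (subset_univ _), Finset.card_univ]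
          omega
      have hKproper : K ≠ Finset.univ := by
        intro h
        rw [h] at hLeq
        simp at hLeq
        exact hLne.ne_empty hLeq
      rw [hLeq]
      exact hsimple K hKne hKproper
    · -- K ∩ L nonempty
      rcases eq_or_ne (K ∩ L) Finset.univ with hKLu | hKLu
      · have hK' : Finset.univ ⊆ K := hKLu ▸ Finset.inter_subset_left
        have hL' : Finset.univ ⊆ L := hKLu ▸ Finset.inter_subset_right
        have : φ Finset.univ ≤ φ K := by
          rw [Finset.univ_subset_iff.mp hK']
        have h2 : φ Finset.univ ≤ φ L := by
          rw [Finset.univ_subset_iff.mp hL']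
        linarith
      · have : 0 < φ (K ∩ L) :=
          hpos _ (Finset.nonempty_iff_ne_empty.mpr hKL) hKLu
        linarith
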